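/- For all natural numbers n and positive integers k, the order-k Changhee number of the second kind satisfies Ĉh_n^{(k)} = ∑_{ℓ=0}^{n} (-1)^ℓ · s₁(n,ℓ) · E_ℓ^{(k)}. -/

import Mathlib

open Finset

/-- Signed Stirling numbers of the first kind. -/
def s1 : ℕ → ℕ → ℚ
  | 0, 0 => 1
  | 0, _ + 1 => 0
  | n + 1, 0 => -(n : ℚ) * s1 n 0
  | n + 1, l + 1 => s1 n l - (n : ℚ) * s1 n (l + 1)

/-- Stirling numbers of the second kind. -/
def S2 : ℕ → ℕ → ℚ
  | 0, 0 => 1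
  | 0, _ + 1 => 0
  | _ + 1, 0 => 0
  | n + 1, l + 1 => S2 n l + ((l : ℚ) + 1) * S2 n (l + 1)

/-- Order-k Euler numbers. -/
def E (k l : ℕ) : ℚ :=
  ∑ j ∈ range (l + 1), (-1/2 : ℚ)^j * ((k + j - 1).choose j) * (j.factorial : ℚ) * S2 l j

/-- Higher-order Changhee numbers of the second kind. -/
def Chh (k n : ℕ) : ℚ :=
  (n.factorial : ℚ) *
    ∑ i ∈ range (n + 1), ((-1 : ℚ))^i / 2^i * ((k + i - 1).choose i) * (k.choose (n - i))

lemma s1_eq_zero : ∀ {n l : ℕ}, n < l → s1 n l = 0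
  | 0, _ + 1, _ => rfl
  | n + 1, l + 1, h => by
    rw [s1, s1_eq_zero (Nat.lt_of_succ_lt_succ h), s1_eq_zero (Nat.lt_of_succ_lt h)]
    ring

lemma S2_eq_zero : ∀ {l j : ℕ}, l < j → S2 l j = 0
  | 0, _ + 1, _ => rfl
  | l + 1, j + 1, h => by
    rw [S2, S2_eq_zero (Nat.lt_of_succ_lt_succ h), S2_eq_zero (Nat.lt_of_succ_lt h)]
    ring

/-- auxiliary: `(-1)^n * C(n-1, n-j) * (n)_(n-j)` for `j ≤ n`, else 0. -/
def Lh (n j : ℕ) : ℚ :=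
  if j ≤ n then (-1)^n * ((n-1).choose (n-j)) * (n.descFactorial (n-j)) else 0


lemma choose_desc_id (j b : ℕ) :
    (((j+b+1).choose (b+1) : ℚ)) * ((j+b+2).descFactorial (b+1) : ℚ) =
      ((j+b).choose (b+1) : ℚ) * ((j+b+1).descFactorial (b+1) : ℚ)
        + (2*(j:ℚ)+b+2) * (((j+b).choose b : ℚ) * ((j+b+1).descFactorial b : ℚ)) := by
  have habs : (((j+b).choose (b+1) : ℚ)) * ((b:ℚ)+1) = ((j+b).choose b : ℚ) * j := by
    have h := Nat.choose_succ_right_eq (j+b) b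
    have hb : j + b - b = j := by omega
    rw [hb] at h
    exact_mod_cast h
  have hp : (((j+b+1).choose (b+1)) : ℚ) = ((j+b).choose b : ℚ) + ((j+b).choose (b+1) : ℚ) := by
    exact_mod_cast Nat.choose_succ_succ (j+b) b
  have hd1 : (((j+b+2).descFactorial (b+1)) : ℚ) = ((j:ℚ)+b+2) * ((j+b+1).descFactorial b : ℚ) := by
    have h := Nat.succ_descFactorial_succ (j+b+1) b
    exact_mod_cast h
  have hd2 : (((j+b+1).descFactorial (b+1)) : ℚ) = ((j:ℚ)+1) * ((j+b+1).descFactorial b : ℚ) := by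
    have h := Nat.descFactorial_succ (j+b+1) b
    have hb : j + b + 1 - b = j + 1 := by omega
    rw [hb] at h
    exact_mod_cast h
  rw [hd1, hd2, hp]
  linear_combination ((j+b+1).descFactorial b : ℚ) * habs

lemma Lh_succ_zero (n : ℕ) : Lh (n+1) 0 = -(n:ℚ) * Lh n 0 := by
  unfold Lh
  rcases Nat.eq_zero_or_pos n with rfl | hn
  · norm_num
  · simp only [Nat.zero_le, if_true, Nat.sub_zero]
    rw [Nat.choose_eq_zero_of_lt (by omega), Nat.choose_eq_zero_of_lt (by omega)]
    push_cast; ring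

lemma Lh_succ_succ (n j : ℕ) :
    Lh (n+1) (j+1) = -Lh n j - ((n:ℚ) + j + 1) * Lh n (j+1) := by
  unfold Lh
  rcases lt_trichotomy j n with h | heq | h
  · obtain ⟨b, hb⟩ : ∃ b, n = j + 1 + b := ⟨n - (j+1), by omega⟩
    subst hb
    have e1 : j + 1 + b + 1 - (j + 1) = b + 1 := by omega
    have e2 : j + 1 + b - j = b + 1 := by omega
    have e3 : j + 1 + b - (j + 1) = b := by omega
    have e4 : j + 1 + b + 1 - 1 = j + b + 1 := by omega
    have e5 : j + 1 + b - 1 = j + b := by omega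
    simp only [if_pos (by omega : j + 1 ≤ j + 1 + b + 1), if_pos (by omega : j ≤ j + 1 + b),
      if_pos (by omega : j + 1 ≤ j + 1 + b), e1, e2, e3, e4, e5]
    have key := choose_desc_id j b
    have harr : j + 1 + b + 1 = j + b + 2 := by omega
    have harr2 : j + 1 + b = j + b + 1 := by omega
    rw [harr, harr2]
    push_cast
    linear_combination ((-1:ℚ))^(j+b) * key
  · subst heq
    simp only [if_pos (le_refl (j+1)), if_pos (le_refl j), if_neg (by omega : ¬ j + 1 ≤ j),
      Nat.sub_self]
    simp [Nat.descFactorial]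
    ring
  · rw [if_neg (by omega), if_neg (by omega), if_neg (by omega)]
    ring

def T (n j : ℕ) : ℚ := ∑ l ∈ range (n+1), (-1)^l * s1 n l * S2 l j

lemma T_succ (n j : ℕ) :
    T (n+1) j = -(∑ l ∈ range (n+1), (-1:ℚ)^l * s1 n l * S2 (l+1) j) - (n:ℚ) * T n j := by
  simp only [T]
  have hg : ∑ l ∈ range (n+1), (-1:ℚ)^(l+1) * s1 n (l+1) * S2 (l+1) j
      = (∑ l ∈ range (n+1), (-1:ℚ)^l * s1 n l * S2 l j) - (-1:ℚ)^0 * s1 n 0 * S2 0 j := by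
    have h := Finset.sum_range_succ' (fun l => (-1:ℚ)^l * s1 n l * S2 l j) (n+1)
    rw [Finset.sum_range_succ, s1_eq_zero (n := n) (by omega)] at h
    simp only [mul_zero, zero_mul, add_zero] at h
    linarith [h]
  rw [Finset.sum_range_succ' (fun l => (-1:ℚ)^l * s1 (n+1) l * S2 l j) (n+1)]
  have hterm : ∀ l ∈ range (n+1), (-1:ℚ)^(l+1) * s1 (n+1) (l+1) * S2 (l+1) j
      = -((-1:ℚ)^l * s1 n l * S2 (l+1) j) - (n:ℚ) * ((-1:ℚ)^(l+1) * s1 n (l+1) * S2 (l+1) j) := by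
    intro l _
    rw [s1]
    ring
  rw [Finset.sum_congr rfl hterm, Finset.sum_sub_distrib, ← Finset.mul_sum, hg,
    show s1 (n+1) 0 = -(n:ℚ) * s1 n 0 from rfl, ← Finset.sum_neg_distrib]
  ring

lemma T_rec_zero (n : ℕ) : T (n+1) 0 = -(n:ℚ) * T n 0 := by
  rw [T_succ]
  have : ∀ l ∈ range (n+1), (-1:ℚ)^l * s1 n l * S2 (l+1) 0 = 0 := by
    intro l _
    rw [show S2 (l+1) 0 = 0 from rfl]
    ring
  rw [Finset.sum_congr rfl this]
  simp

lemma T_rec_succ (n j : ℕ) :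
    T (n+1) (j+1) = -T n j - ((n:ℚ) + j + 1) * T n (j+1) := by
  rw [T_succ]
  have : ∀ l ∈ range (n+1), (-1:ℚ)^l * s1 n l * S2 (l+1) (j+1)
      = (-1:ℚ)^l * s1 n l * S2 l j + ((j:ℚ)+1) * ((-1:ℚ)^l * s1 n l * S2 l (j+1)) := by
    intro l _
    rw [S2]
    ring
  rw [Finset.sum_congr rfl this, Finset.sum_add_distrib, ← Finset.mul_sum]
  show -(T n j + ((j:ℚ)+1) * T n (j+1)) - (n:ℚ) * T n (j+1) = _
  ring

lemma T_eq : ∀ n j, T n j = Lh n j := by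
  intro n
  induction n with
  | zero =>
    intro j
    cases j with
    | zero => simp [T, Lh, s1, S2]
    | succ j =>
      simp only [T, Lh]
      rw [if_neg (by omega)]
      simp [S2_eq_zero (by omega : (0:ℕ) < j + 1)]
  | succ n ih =>
    intro j
    cases j with
    | zero => rw [T_rec_zero, ih, Lh_succ_zero]
    | succ j => rw [T_rec_succ, ih, ih, Lh_succ_succ]

noncomputable section

/-- geometric series `∑ (-X/2)^n = (1+X/2)⁻¹`. -/
def G : PowerSeries ℚ := PowerSeries.mk fun n => (-1/2 : ℚ)^n

lemma G_unit : (1 + PowerSeries.C (1/2) * PowerSeries.X) * G = 1 := by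
  ext n
  rw [add_mul, one_mul, map_add, mul_assoc, PowerSeries.coeff_C_mul]
  cases n with
  | zero => simp [G]
  | succ n =>
    rw [PowerSeries.coeff_succ_X_mul]
    simp only [G, PowerSeries.coeff_mk, PowerSeries.coeff_one, Nat.succ_ne_zero, if_false]
    ring

lemma hockey (k : ℕ) : ∀ n, ∑ i ∈ range (n+1), (k + i - 1).choose i = (k + n).choose n := by
  intro n
  induction n with
  | zero => simp
  | succ n ih =>
    rw [Finset.sum_range_succ, ih]
    have h1 : k + (n+1) - 1 = k + n := by omega
    rw [h1]
    exact (Nat.choose_succ_succ' (k+n) n).symm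

lemma coeff_G_pow (k : ℕ) : ∀ n, (PowerSeries.coeff n) (G^k)
    = (-1/2 : ℚ)^n * ((k + n - 1).choose n) := by
  induction k with
  | zero =>
    intro n
    cases n with
    | zero => simp
    | succ n =>
      rw [pow_zero, PowerSeries.coeff_one, if_neg (Nat.succ_ne_zero n)]
      rw [Nat.choose_eq_zero_of_lt (by omega)]
      simp
  | succ k ih =>
    intro n
    rw [pow_succ, PowerSeries.coeff_mul, Finset.Nat.sum_antidiagonal_eq_sum_range_succ_mk]
    have hterm : ∀ i ∈ range (n+1),
        (PowerSeries.coeff i) (G^k) * (PowerSeries.coeff (n-i)) G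
          = (-1/2 : ℚ)^n * ((k + i - 1).choose i) := by
      intro i hi
      have hin : i ≤ n := Nat.lt_succ_iff.mp (Finset.mem_range.mp hi)
      rw [ih, show (PowerSeries.coeff (n-i)) G = (-1/2:ℚ)^(n-i) from PowerSeries.coeff_mk _ _]
      rw [mul_comm ((-1/2:ℚ)^i) _, mul_assoc, ← pow_add]
      rw [show i + (n - i) = n from by omega]
      ring
    rw [Finset.sum_congr rfl hterm, ← Finset.mul_sum]
    have : ∑ i ∈ range (n+1), (((k + i - 1).choose i : ℕ) : ℚ) = (((k+n).choose n : ℕ) : ℚ) := by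
      exact_mod_cast congrArg (Nat.cast : ℕ → ℚ) (hockey k n)
    rw [this, show k + 1 + n - 1 = k + n from by omega]

end

section

lemma coeff_one_add_X_pow_ps (k n : ℕ) :
    PowerSeries.coeff n ((1 + PowerSeries.X)^k) = (k.choose n : ℚ) := by
  have h : (((1 + Polynomial.X)^k : Polynomial ℚ) : PowerSeries ℚ) = (1 + PowerSeries.X)^k := by
    rw [Polynomial.coe_pow, Polynomial.coe_add, Polynomial.coe_one, Polynomial.coe_X]
  rw [← h, Polynomial.coeff_coe, Polynomial.coeff_one_add_X_pow]

lemma sum_ite_le (f : ℕ → ℚ) (k n : ℕ) (hf : ∀ t, k < t → f t = 0) :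
    ∑ t ∈ range (k+1), (if t ≤ n then f t else 0) = ∑ t ∈ range (n+1), f t := by
  rcases le_or_gt k n with h | h
  · rw [Finset.sum_subset (Finset.range_subset_range.mpr (by omega : k + 1 ≤ n + 1))
      (fun x hx hx2 => by
        rw [if_pos (by simp at hx; omega : x ≤ n), hf x (by simp at hx2 ⊢; omega)])]
    exact Finset.sum_congr rfl fun t ht => if_pos (by simp at ht; omega)
  · rw [← Finset.sum_subset (Finset.range_subset_range.mpr (by omega : n + 1 ≤ k + 1))
      (fun x hx hx2 => if_neg (by simp at hx2; omega))]
    exact Finset.sum_congr rfl fun t ht => if_pos (by simp at ht; omega)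

lemma coeff_GX (k n : ℕ) : PowerSeries.coeff n (G^k * (1 + PowerSeries.X)^k)
    = ∑ i ∈ range (n+1), (-1/2:ℚ)^i * ((k+i-1).choose i) * (k.choose (n-i)) := by
  rw [PowerSeries.coeff_mul, Finset.Nat.sum_antidiagonal_eq_sum_range_succ_mk]
  exact Finset.sum_congr rfl fun i hi => by rw [coeff_G_pow, coeff_one_add_X_pow_ps]

lemma coeff_GX' (k n : ℕ) : PowerSeries.coeff n (G^k * (1 + PowerSeries.X)^k)
    = ∑ t ∈ range (n+1), (1/2:ℚ)^t * (k.choose t) * ((-1/2:ℚ)^(n-t) * ((n-1).choose (n-t))) := by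
  have h2 : (PowerSeries.C (1/2:ℚ)) + PowerSeries.C (1/2:ℚ) = 1 := by
    rw [← map_add]; norm_num
  have h1 : G^k * (1 + PowerSeries.X)^k
      = (PowerSeries.C (1/2) * (PowerSeries.X * G) + 1)^k := by
    rw [← mul_pow]
    congr 1
    linear_combination G_unit - (PowerSeries.X * G) * h2
  rw [h1, add_pow, map_sum]
  have hterm : ∀ t ∈ range (k+1),
      PowerSeries.coeff n ((PowerSeries.C (1/2) * (PowerSeries.X * G))^t
         * 1^(k-t) * (k.choose t : PowerSeries ℚ))
      = if t ≤ n then (1/2:ℚ)^t * (k.choose t) * ((-1/2:ℚ)^(n-t) * ((n-1).choose (n-t))) else 0 := by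
    intro t _
    have he : (PowerSeries.C (1/2) * (PowerSeries.X * G))^t * 1^(k-t)
          * (k.choose t : PowerSeries ℚ)
        = PowerSeries.C ((1/2:ℚ)^t * (k.choose t)) * (PowerSeries.X^t * G^t) := by
      conv_rhs => rw [map_mul, map_pow, map_natCast]
      ring
    rw [he, PowerSeries.coeff_C_mul, PowerSeries.coeff_X_pow_mul', mul_ite, mul_zero]
    split_ifs with h
    · rw [coeff_G_pow, show t + (n - t) - 1 = n - 1 from by omega]
    · rfl
  rw [Finset.sum_congr rfl hterm]
  exact sum_ite_le _ k n fun t ht => by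
    simp [Nat.choose_eq_zero_of_lt ht]

end

section reflectpart
open Polynomial

lemma coeff_one_sub_X_pow (m b : ℕ) :
    ((1 - X : ℚ[X])^m).coeff b = (-1:ℚ)^b * (m.choose b) := by
  have h : (1 - X : ℚ[X]) = (-1)^1 * (X + C (-1)) := by
    simp [C_neg]
    ring
  rw [h, mul_pow, ← pow_mul]
  rw [show ((-1:ℚ[X])^(1*m)) = C ((-1:ℚ)^m) from by rw [map_pow, map_neg, map_one]; ring_nf]
  rw [coeff_C_mul, coeff_X_add_C_pow]
  rcases le_or_gt b m with hbm | hbm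
  · obtain ⟨c, rfl⟩ : ∃ c, m = b + c := ⟨m - b, by omega⟩
    rw [show b + c - b = c from by omega]
    rw [show (-1:ℚ)^(b+c) = (-1)^b * (-1)^c from pow_add _ _ _]
    have hcc : (-1:ℚ)^c * (-1)^c = 1 := by
      rw [← pow_add, ← two_mul, pow_mul]
      norm_num
    linear_combination (((b+c).choose b : ℚ) * (-1:ℚ)^b) * hcc
  · rw [Nat.choose_eq_zero_of_lt hbm]
    ring

lemma reflect_one_add_X_pow (k : ℕ) :
    reflect k ((1 + X : ℚ[X])^k) = (1 + X)^k := by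
  ext i
  rw [coeff_reflect, coeff_one_add_X_pow, coeff_one_add_X_pow]
  rcases le_or_gt i k with h | h
  · rw [revAt_le h, Nat.choose_symm h]
  · rw [revAt_eq_self_of_lt h]

lemma reflect_one_sub_X_pow (m : ℕ) :
    reflect m ((1 - X : ℚ[X])^m) = C ((-1:ℚ)^m) * (1 - X)^m := by
  ext i
  rw [coeff_reflect, coeff_C_mul, coeff_one_sub_X_pow, coeff_one_sub_X_pow]
  rcases le_or_gt i m with h | h
  · rw [revAt_le h, Nat.choose_symm h]
    obtain ⟨c, rfl⟩ : ∃ c, m = i + c := ⟨m - i, by omega⟩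
    rw [show i + c - i = c from by omega,
      show (-1:ℚ)^(i+c) = (-1)^i * (-1)^c from pow_add _ _ _]
    have hcc : (-1:ℚ)^i * (-1)^i = 1 := by
      rw [← pow_add, ← two_mul, pow_mul]
      norm_num
    linear_combination (-(((i+c).choose i : ℚ) * (-1:ℚ)^c)) * hcc
  · rw [revAt_eq_self_of_lt h, Nat.choose_eq_zero_of_lt h]
    ring

lemma natDegree_one_add_X_pow_le (k : ℕ) : ((1 + X : ℚ[X])^k).natDegree ≤ k := by
  calc ((1 + X : ℚ[X])^k).natDegree ≤ k * (1 + X : ℚ[X]).natDegree := natDegree_pow_le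
  _ ≤ k * 1 := by
      have : (1 + X : ℚ[X]).natDegree ≤ 1 :=
        (natDegree_add_le _ _).trans (by simp)
      exact Nat.mul_le_mul_left k this
  _ = k := by ring

lemma natDegree_one_sub_X_pow_le (m : ℕ) : ((1 - X : ℚ[X])^m).natDegree ≤ m := by
  calc ((1 - X : ℚ[X])^m).natDegree ≤ m * (1 - X : ℚ[X]).natDegree := natDegree_pow_le
  _ ≤ m * 1 := by
      have : (1 - X : ℚ[X]).natDegree ≤ 1 :=
        (natDegree_sub_le _ _).trans (by simp)
      exact Nat.mul_le_mul_left m this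
  _ = m := by ring

/-- palindromic symmetry of `(1+X)^k (1-X)^m`. -/
lemma reflect_key (k m : ℕ) (hk : 1 ≤ k) :
    ((1 + X : ℚ[X])^k * (1 - X)^m).coeff (m+1)
      = (-1:ℚ)^m * ((1 + X : ℚ[X])^k * (1 - X)^m).coeff (k-1) := by
  have hrefl : reflect (k + m) ((1 + X : ℚ[X])^k * (1 - X)^m)
      = C ((-1:ℚ)^m) * ((1 + X)^k * (1 - X)^m) := by
    rw [reflect_mul _ _ (natDegree_one_add_X_pow_le k) (natDegree_one_sub_X_pow_le m),
      reflect_one_add_X_pow, reflect_one_sub_X_pow]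
    ring
  have h2 := congrArg (fun p => Polynomial.coeff p (k-1)) hrefl
  simp only [coeff_reflect, coeff_C_mul] at h2
  rw [revAt_le (by omega : k - 1 ≤ k + m), show k + m - (k-1) = m + 1 from by omega] at h2
  exact h2

end reflectpart

section I2
open Polynomial

lemma R2 (k m n : ℕ) : ((1 + X : ℚ[X])^k * (1 - X)^m).coeff n
    = ∑ t ∈ range (n+1), (k.choose t : ℚ) * ((-1:ℚ)^(n-t) * ((m.choose (n-t) : ℚ))) := by
  rw [coeff_mul, Finset.Nat.sum_antidiagonal_eq_sum_range_succ_mk]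
  exact Finset.sum_congr rfl fun t ht => by
    rw [coeff_one_add_X_pow, coeff_one_sub_X_pow]

lemma R1 (k m : ℕ) : ((1 + X : ℚ[X])^k * (1 - X)^m).coeff (k-1)
    = ∑ a ∈ range (m+1),
        (-1:ℚ)^a * 2^(m-a) * (m.choose a) * (((k+a).choose (k-1) : ℚ)) := by
  have hsplit : (1 - X:ℚ[X])^m
      = ∑ a ∈ range (m+1), (-(1+X))^a * (2:ℚ[X])^(m-a) * ((m.choose a : ℕ) : ℚ[X]) := by
    rw [show (1-X:ℚ[X]) = -(1+X) + 2 from by ring, add_pow]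
  rw [hsplit, Finset.mul_sum, finset_sum_coeff]
  refine Finset.sum_congr rfl fun a ha => ?_
  have he : (1 + X:ℚ[X])^k * ((-(1+X))^a * (2:ℚ[X])^(m-a) * ((m.choose a : ℕ) : ℚ[X]))
      = C ((-1:ℚ)^a * 2^(m-a) * (m.choose a)) * (1+X)^(k+a) := by
    rw [map_mul, map_mul, map_pow, map_pow, map_neg, map_one, map_natCast,
      map_ofNat (Polynomial.C : ℚ →+* ℚ[X]), pow_add, neg_pow]
    ring
  rw [he, coeff_C_mul, coeff_one_add_X_pow]

lemma I2final (n k : ℕ) (hk : 1 ≤ k) :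
    ∑ t ∈ range (n+1), (1/2:ℚ)^t * (k.choose t) * ((-1/2:ℚ)^(n-t) * (((n-1).choose (n-t) : ℕ) : ℚ))
      = (-1:ℚ)^n * ∑ j ∈ range (n+1), (-1/2:ℚ)^j * (((k+j-1).choose j : ℕ) : ℚ)
          * (((n-1).choose (n-j) : ℕ) : ℚ) := by
  cases n with
  | zero => simp
  | succ m =>
    rw [show m + 1 - 1 = m from rfl]
    have hL : ∑ t ∈ range (m+2), (1/2:ℚ)^t * (k.choose t)
          * ((-1/2:ℚ)^(m+1-t) * ((m.choose (m+1-t) : ℕ) : ℚ))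
        = (1/2:ℚ)^(m+1) * ((1 + X : ℚ[X])^k * (1 - X)^m).coeff (m+1) := by
      rw [R2, Finset.mul_sum]
      refine Finset.sum_congr rfl fun t ht => ?_
      have htm : t ≤ m + 1 := by simp at ht; omega
      obtain ⟨c, hc⟩ : ∃ c, m + 1 = t + c := ⟨m + 1 - t, by omega⟩
      rw [hc, show t + c - t = c from by omega,
        show ((-1:ℚ)/2)^c = (-1:ℚ)^c * (1/2)^c from by rw [← mul_pow]; norm_num]
      ring
    have hR : ∑ j ∈ range (m+2), (-1/2:ℚ)^j * (((k+j-1).choose j : ℕ) : ℚ)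
          * ((m.choose (m+1-j) : ℕ) : ℚ)
        = -((1/2:ℚ)^(m+1) * ((1 + X : ℚ[X])^k * (1 - X)^m).coeff (k-1)) := by
      rw [R1, Finset.sum_range_succ' _ (m+1)]
      have h0 : (-1/2:ℚ)^0 * (((k+0-1).choose 0 : ℕ) : ℚ) * ((m.choose (m+1-0) : ℕ) : ℚ)
          = 0 := by
        rw [show m + 1 - 0 = m + 1 from rfl, Nat.choose_eq_zero_of_lt (by omega : m < m + 1)]
        simp
      rw [h0, add_zero, Finset.mul_sum, ← Finset.sum_neg_distrib]
      refine Finset.sum_congr rfl fun a ha => ?_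
      have ham : a ≤ m := by simp at ha; omega
      obtain ⟨c, hc⟩ : ∃ c, m = a + c := ⟨m - a, by omega⟩
      have hch : (k+(a+1)-1).choose (a+1) = (k+a).choose (k-1) := by
        rw [show k + (a+1) - 1 = k + a from by omega,
          ← Nat.choose_symm (by omega : a + 1 ≤ k + a),
          show k + a - (a+1) = k - 1 from by omega]
      have hsym : m.choose (m+1-(a+1)) = m.choose a := by
        rw [show m + 1 - (a+1) = m - a from by omega]
        exact Nat.choose_symm ham
      rw [hch, hsym, show m - a = c from by omega,
        show (1/2:ℚ)^(m+1) = (1/2:ℚ)^(a+c+1) from by rw [hc],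
        show ((-1:ℚ)/2)^(a+1) = (-1:ℚ)^(a+1) * (1/2)^(a+1) from by rw [← mul_pow]; norm_num]
      have h2c : (2:ℚ)^c * (1/2:ℚ)^c = 1 := by rw [← mul_pow]; norm_num
      linear_combination ((((k+a).choose (k-1) : ℕ) : ℚ) * ((m.choose a : ℕ) : ℚ)
        * (1/2:ℚ)^(a+1) * (-1:ℚ)^a) * h2c
    rw [hL, hR, reflect_key k m hk]
    ring

end I2


lemma c_mul_Lh (n k j : ℕ) (hj : j ≤ n) :
    ((-1/2:ℚ)^j * (((k+j-1).choose j : ℕ):ℚ) * (j.factorial:ℚ)) * Lh n j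
      = (-1:ℚ)^n * (n.factorial:ℚ) * ((-1/2:ℚ)^j * (((k+j-1).choose j : ℕ):ℚ)
          * (((n-1).choose (n-j) : ℕ):ℚ)) := by
  unfold Lh
  rw [if_pos hj]
  have hfd : (j.factorial : ℚ) * ((n.descFactorial (n-j) : ℕ) : ℚ) = (n.factorial : ℚ) := by
    have h := Nat.factorial_mul_descFactorial (show n - j ≤ n from by omega)
    rw [show n - (n - j) = j from by omega] at h
    exact_mod_cast h
  linear_combination ((-1:ℚ)^n * (-1/2:ℚ)^j * (((k+j-1).choose j : ℕ):ℚ)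
    * (((n-1).choose (n-j) : ℕ):ℚ)) * hfd

lemma RHS_eq (n k : ℕ) :
    ∑ l ∈ range (n+1), (-1:ℚ)^l * s1 n l * E k l
      = (-1:ℚ)^n * ((n.factorial : ℚ) * ∑ j ∈ range (n+1),
          (-1/2:ℚ)^j * (((k+j-1).choose j : ℕ):ℚ) * (((n-1).choose (n-j) : ℕ):ℚ)) := by
  have hE : ∀ l ∈ range (n+1), (-1:ℚ)^l * s1 n l * E k l
      = ∑ j ∈ range (n+1), ((-1/2:ℚ)^j * (((k+j-1).choose j : ℕ):ℚ) * (j.factorial:ℚ))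
          * ((-1:ℚ)^l * s1 n l * S2 l j) := by
    intro l hl
    have hll : l + 1 ≤ n + 1 := by simp at hl; omega
    have hz : ∀ j ∈ range (n+1), j ∉ range (l+1) →
        (-1:ℚ)^l * s1 n l * ((-1/2 : ℚ)^j * (((k + j - 1).choose j : ℕ) : ℚ)
          * (j.factorial : ℚ) * S2 l j) = 0 := by
      intro j _ hj2
      rw [S2_eq_zero (show l < j from by simp at hj2; omega)]
      ring
    simp only [E, Finset.mul_sum]
    rw [Finset.sum_subset (Finset.range_subset_range.mpr hll) hz]
    exact Finset.sum_congr rfl fun j hj => by ring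
  rw [Finset.sum_congr rfl hE, Finset.sum_comm, Finset.mul_sum, Finset.mul_sum]
  refine Finset.sum_congr rfl fun j hj => ?_
  rw [← Finset.mul_sum,
    show (∑ l ∈ range (n+1), (-1:ℚ)^l * s1 n l * S2 l j) = T n j from rfl,
    T_eq, c_mul_Lh n k j (by simp at hj; omega)]
  ring

theorem second_changhee_eq_stirling_euler (n k : ℕ) (hk : 1 ≤ k) :
    Chh k n = ∑ l ∈ range (n + 1), (-1 : ℚ)^l * s1 n l * E k l := by
  have h1 : ∑ i ∈ range (n+1), ((-1 : ℚ))^i / 2^i * ((k + i - 1).choose i) * (k.choose (n - i))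
      = ∑ i ∈ range (n+1), (-1/2:ℚ)^i * (((k+i-1).choose i : ℕ) : ℚ)
          * ((k.choose (n-i) : ℕ) : ℚ) := by
    refine Finset.sum_congr rfl fun i _ => ?_
    rw [← div_pow]
  have key : ∑ i ∈ range (n+1), (-1/2:ℚ)^i * (((k+i-1).choose i : ℕ) : ℚ)
          * ((k.choose (n-i) : ℕ) : ℚ)
      = (-1:ℚ)^n * ∑ j ∈ range (n+1), (-1/2:ℚ)^j * (((k+j-1).choose j : ℕ) : ℚ)
          * (((n-1).choose (n-j) : ℕ) : ℚ) := by
    rw [← coeff_GX, coeff_GX', I2final n k hk]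
  rw [Chh, h1, key, RHS_eq]
  ring
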